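/- For nonzero matrices M, N ∈ M_{n+1}(F) (n ≥ 2), the f-orthogonal complements of M and N intersect the hyperplane of trace-zero matrices in the same subspace if and only if the span of {M, I} equals the span of {N, I}, where I is the identity matrix. -/

import Mathlib

open Matrix

section aux
variable {F : Type*} [Field F] {m : ℕ}

private lemma trace_faithful (A : Matrix (Fin m) (Fin m) F)
    (h : ∀ X, (A * X).trace = 0) : A = 0 := by
  ext i j
  have := h (Matrix.single j i 1)
  simpa [Matrix.trace, Matrix.mul_apply, Matrix.single, ite_and, Finset.sum_ite_eq, Finset.sum_ite_eq'] using this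

private lemma key (A B : Matrix (Fin m) (Fin m) F)
    (h : ∀ X : Matrix (Fin m) (Fin m) F, (A * X).trace = 0 → X.trace = 0 →
      (B * X).trace = 0) :
    B ∈ Submodule.span F {A, (1 : Matrix (Fin m) (Fin m) F)} := by
  let tr : Matrix (Fin m) (Fin m) F →ₗ[F] F := Matrix.traceLinearMap (Fin m) F F
  let L : Fin 2 → (Matrix (Fin m) (Fin m) F →ₗ[F] F) :=
    ![tr.comp (LinearMap.mulLeft F A), tr]
  have hker : ⨅ i, LinearMap.ker (L i) ≤ LinearMap.ker (tr.comp (LinearMap.mulLeft F B)) := by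
    intro X hX
    simp only [Submodule.mem_iInf] at hX
    have h0 := hX 0
    have h1 := hX 1
    simp only [L, LinearMap.mem_ker, LinearMap.comp_apply, LinearMap.mulLeft_apply,
      Matrix.cons_val_zero, Matrix.cons_val_one, Matrix.head_cons] at h0 h1 ⊢
    exact h X h0 h1
  have hmem := mem_span_of_iInf_ker_le_ker hker
  rw [Submodule.mem_span_range_iff_exists_fun] at hmem
  obtain ⟨c, hc⟩ := hmem
  have hBval : ∀ X, ((c 0 • A + c 1 • 1 - B) * X).trace = 0 := by
    intro X
    have := congrFun (congrArg DFunLike.coe hc) X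
    simp only [Fin.sum_univ_two, LinearMap.add_apply, LinearMap.smul_apply, L,
      LinearMap.comp_apply, LinearMap.mulLeft_apply, Matrix.cons_val_zero,
      Matrix.cons_val_one, Matrix.head_cons, smul_eq_mul, tr,
      Matrix.traceLinearMap_apply] at this
    simp only [Matrix.sub_mul, Matrix.add_mul, Matrix.smul_mul, Matrix.one_mul,
      Matrix.trace_sub, Matrix.trace_add, Matrix.trace_smul, smul_eq_mul]
    rw [this]; ring
  have hB : B = c 0 • A + c 1 • 1 := by
    have := trace_faithful _ hBval
    linear_combination (norm := module) -this
  rw [hB]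
  exact Submodule.add_mem _
    (Submodule.smul_mem _ _ (Submodule.subset_span (by simp)))
    (Submodule.smul_mem _ _ (Submodule.subset_span (by simp)))

end aux

/-- For nonzero `M, N`, the `f`-perps of `M` and `N` meet the hyperplane of
trace-zero matrices in the same set iff `span {M, I} = span {N, I}`. -/
theorem perp_inter_tracezero_eq_iff (F : Type*) [Field F] (n : ℕ) (hn : 2 ≤ n)
    (M N : Matrix (Fin (n+1)) (Fin (n+1)) F) (hM : M ≠ 0) (hN : N ≠ 0) :
    ({X : Matrix (Fin (n+1)) (Fin (n+1)) F | (M * X).trace = 0} ∩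
        {X | X.trace = 0}
      = {X : Matrix (Fin (n+1)) (Fin (n+1)) F | (N * X).trace = 0} ∩
        {X | X.trace = 0})
    ↔ Submodule.span F {M, (1 : Matrix (Fin (n+1)) (Fin (n+1)) F)}
        = Submodule.span F {N, (1 : Matrix (Fin (n+1)) (Fin (n+1)) F)} := by
  constructor
  · intro h
    have hMN : M ∈ Submodule.span F {N, (1 : Matrix (Fin (n+1)) (Fin (n+1)) F)} := by
      apply key
      intro X h1 h2
      have : X ∈ ({X : Matrix (Fin (n+1)) (Fin (n+1)) F | (N * X).trace = 0} ∩
          {X | X.trace = 0}) := ⟨h1, h2⟩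
      rw [← h] at this
      exact this.1
    have hNM : N ∈ Submodule.span F {M, (1 : Matrix (Fin (n+1)) (Fin (n+1)) F)} := by
      apply key
      intro X h1 h2
      have : X ∈ ({X : Matrix (Fin (n+1)) (Fin (n+1)) F | (M * X).trace = 0} ∩
          {X | X.trace = 0}) := ⟨h1, h2⟩
      rw [h] at this
      exact this.1
    apply le_antisymm <;> rw [Submodule.span_le] <;> rintro x (rfl | rfl)
    · exact hMN
    · exact Submodule.subset_span (by simp)
    · exact hNM
    · exact Submodule.subset_span (by simp)
  · intro h
    have hMN : M ∈ Submodule.span F {N, (1 : Matrix (Fin (n+1)) (Fin (n+1)) F)} := by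
      rw [← h]; exact Submodule.subset_span (by simp)
    have hNM : N ∈ Submodule.span F {M, (1 : Matrix (Fin (n+1)) (Fin (n+1)) F)} := by
      rw [h]; exact Submodule.subset_span (by simp)
    rw [Submodule.mem_span_pair] at hMN hNM
    obtain ⟨a, b, hab⟩ := hMN
    obtain ⟨c, d, hcd⟩ := hNM
    ext X
    simp only [Set.mem_inter_iff, Set.mem_setOf_eq]
    constructor
    · rintro ⟨h1, h2⟩
      refine ⟨?_, h2⟩
      rw [← hcd]
      simp [Matrix.add_mul, Matrix.smul_mul, h1, h2]
    · rintro ⟨h1, h2⟩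
      refine ⟨?_, h2⟩
      rw [← hab]
      simp [Matrix.add_mul, Matrix.smul_mul, h1, h2]
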